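/- arXiv:2011.06618 — 5 statements merged into one kernel-verified Lean document; each statement's English description precedes it below -/
import Mathlib

section
/- Let (ϖ_n)_{n∈ℕ} be a stick-breaking process on [0,1] based on the uniform law U(0,1), i.e. L_0 = 1, ϖ_n = L_{n-1}·U_n and L_n = L_{n-1} − ϖ_n where (U_n) are i.i.d. uniform on (0,1). Then for any measurable function φ : (0,1) → [0,∞), we have ∑_{n∈ℕ} E[φ(ϖ_n)] = ∫_0^1 φ(x)/x dx. -/
open MeasureTheory ProbabilityTheory Set
open scoped ENNReal

namespace StickBreakAux

noncomputable def unif : Measure ℝ := volume.restrict (Set.Ioo (0:ℝ) 1)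

noncomputable def ρ (n : ℕ) (x : ℝ) : ℝ≥0∞ :=
  ENNReal.ofReal ((-Real.log x) ^ n / n.factorial)

lemma ρ_meas (n : ℕ) : Measurable (ρ n) := by
  apply ENNReal.measurable_ofReal.comp
  exact ((Real.measurable_log.neg.pow measurable_const).div_const _)

instance : IsProbabilityMeasure unif := by
  constructor
  simp [unif, Real.volume_Ioo]

-- reflection preserves unif
lemma map_reflect : Measure.map (fun v : ℝ => 1 - v) unif = unif := by
  have hmeas : Measurable (fun v : ℝ => 1 - v) := measurable_const.sub measurable_id
  have hpre : (fun v : ℝ => 1 - v) ⁻¹' (Set.Ioo 0 1) = Set.Ioo 0 1 := by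
    ext v
    simp only [Set.mem_preimage, Set.mem_Ioo]
    constructor <;> rintro ⟨h1, h2⟩ <;> constructor <;> linarith
  have hvol : Measure.map (fun v : ℝ => 1 - v) volume = volume :=
    Measure.map_sub_left_eq_self volume 1
  calc Measure.map (fun v : ℝ => 1 - v) unif
      = Measure.map (fun v : ℝ => 1 - v) (volume.restrict ((fun v : ℝ => 1 - v) ⁻¹' (Set.Ioo 0 1))) := by
        rw [hpre]; rfl
    _ = (Measure.map (fun v : ℝ => 1 - v) volume).restrict (Set.Ioo 0 1) :=
        (Measure.restrict_map hmeas measurableSet_Ioo).symm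
    _ = unif := by rw [hvol]; rfl

-- change of variables for multiplication
lemma mapScale {x : ℝ} (hx : x ∈ Set.Ioo (0:ℝ) 1) (f : ℝ → ℝ≥0∞) (hf : Measurable f) :
    ∫⁻ v in Set.Ioo (0:ℝ) 1, f (x * v) = ENNReal.ofReal x⁻¹ * ∫⁻ y in Set.Ioo 0 x, f y := by
  obtain ⟨hx0, hx1⟩ := hx
  have hmeas : Measurable (x * ·) := measurable_const_mul x
  have h1 : ∫⁻ v in Set.Ioo (0:ℝ) 1, f (x * v)
      = ∫⁻ y, f y ∂(Measure.map (x * ·) (volume.restrict (Set.Ioo 0 1))) := by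
    rw [lintegral_map hf hmeas]
  have hpre : (x * ·) ⁻¹' (Set.Ioo 0 x) = Set.Ioo 0 1 := by
    rw [Set.preimage_const_mul_Ioo₀ _ _ hx0]
    simp [zero_div, div_self hx0.ne']
  have h2 : Measure.map (x * ·) (volume.restrict (Set.Ioo 0 1))
      = ENNReal.ofReal x⁻¹ • volume.restrict (Set.Ioo 0 x) := by
    rw [← hpre, ← Measure.restrict_map hmeas measurableSet_Ioo, Real.map_volume_mul_left hx0.ne',
      abs_of_pos (inv_pos.mpr hx0), Measure.restrict_smul]
  rw [h1, h2, lintegral_smul_measure, smul_eq_mul]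

-- the calculus lemma
lemma calc1 (n : ℕ) {y : ℝ} (hy : y ∈ Set.Ioo (0:ℝ) 1) :
    ∫⁻ x in Set.Ioo y 1, ρ n x * ENNReal.ofReal x⁻¹ = ρ (n + 1) y := by
  obtain ⟨hy0, hy1⟩ := hy
  set G : ℝ → ℝ := fun x => (-Real.log x) ^ n / n.factorial * x⁻¹ with hG
  have hGcont : ContinuousOn G (Set.Icc y 1) := by
    apply ContinuousOn.mul
    · exact ((Real.continuousOn_log.mono (by
        intro x hx
        simp only [Set.mem_compl_iff, Set.mem_singleton_iff]
        exact (lt_of_lt_of_le hy0 hx.1).ne')).neg.pow n).div_const _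
    · exact ContinuousOn.inv₀ continuousOn_id (fun x hx => (lt_of_lt_of_le hy0 hx.1).ne')
  have hInt : IntegrableOn G (Set.Ioo y 1) volume :=
    (hGcont.integrableOn_Icc).mono_set Set.Ioo_subset_Icc_self
  have hnn : ∀ x ∈ Set.Ioo y 1, 0 ≤ G x := by
    intro x hx
    have hx0 : 0 < x := lt_trans hy0 hx.1
    have : Real.log x ≤ 0 := Real.log_nonpos hx0.le hx.2.le
    exact mul_nonneg (div_nonneg (pow_nonneg (by linarith) n) (Nat.cast_nonneg _))
      (inv_nonneg.mpr hx0.le)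
  have hstep : ∀ x ∈ Set.Ioo y 1, ρ n x * ENNReal.ofReal x⁻¹ = ENNReal.ofReal (G x) := by
    intro x hx
    have hx0 : 0 < x := lt_trans hy0 hx.1
    have : Real.log x ≤ 0 := Real.log_nonpos hx0.le hx.2.le
    rw [ρ, ← ENNReal.ofReal_mul (div_nonneg (pow_nonneg (by linarith) n) (Nat.cast_nonneg _))]
  rw [setLIntegral_congr_fun measurableSet_Ioo hstep]
  have hofReal : ∫⁻ x in Set.Ioo y 1, ENNReal.ofReal (G x)
      = ENNReal.ofReal (∫ x in Set.Ioo y 1, G x) := by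
    exact (ofReal_integral_eq_lintegral_ofReal hInt
      (by filter_upwards [ae_restrict_mem measurableSet_Ioo] with x hx using hnn x hx)).symm
  rw [hofReal]
  have hIoo : ∫ x in Set.Ioo y 1, G x = ∫ x in y..1, G x := by
    rw [intervalIntegral.integral_of_le hy1.le, ← MeasureTheory.integral_Ioc_eq_integral_Ioo]
  have hFTC : ∫ x in y..1, G x
      = (-Real.log y) ^ (n+1) / (n+1).factorial := by
    have hderiv : ∀ x ∈ Set.uIcc y 1, HasDerivAt
        (fun x => -((-Real.log x) ^ (n+1) / (n+1).factorial)) (G x) x := by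
      intro x hx
      rw [Set.uIcc_of_le hy1.le] at hx
      have hx0 : 0 < x := lt_of_lt_of_le hy0 hx.1
      have h1 : HasDerivAt (fun x : ℝ => -Real.log x) (-x⁻¹) x :=
        ((Real.hasDerivAt_log hx0.ne').neg)
      have h2 : HasDerivAt (fun x : ℝ => (-Real.log x) ^ (n+1))
          ((n+1 : ℕ) * (-Real.log x) ^ n * (-x⁻¹)) x := by
        simpa using (h1.fun_pow (n+1))
      have h3 : HasDerivAt (fun x => -((-Real.log x) ^ (n+1) / (n+1).factorial))
          (-(((n+1 : ℕ) * (-Real.log x) ^ n * (-x⁻¹)) / (n+1).factorial)) x :=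
        (h2.div_const ((n+1).factorial : ℝ)).neg
      refine h3.congr_deriv ?_
      rw [hG]
      field_simp [Nat.factorial_succ]
      rw [Nat.factorial_succ]
      push_cast
      ring
    have hci : IntervalIntegrable G volume y 1 := by
      apply ContinuousOn.intervalIntegrable
      rwa [Set.uIcc_of_le hy1.le]
    rw [intervalIntegral.integral_eq_sub_of_hasDerivAt hderiv hci]
    simp [Real.log_one]
  rw [hIoo, hFTC, ρ]

lemma keyStep {Ω : Type*} [MeasurableSpace Ω] (μ : Measure Ω) [IsProbabilityMeasure μ]
    (X V : Ω → ℝ) (hX : Measurable X) (hV : Measurable V)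
    (hind : IndepFun X V μ) (hVlaw : Measure.map V μ = unif)
    (ρ' : ℝ → ℝ≥0∞) (hρ' : Measurable ρ')
    (hXd : ∀ f : ℝ → ℝ≥0∞, Measurable f →
      ∫⁻ ω, f (X ω) ∂μ = ∫⁻ x in Set.Ioo (0:ℝ) 1, f x * ρ' x)
    (f : ℝ → ℝ≥0∞) (hf : Measurable f) :
    ∫⁻ ω, f (X ω * V ω) ∂μ
      = ∫⁻ y in Set.Ioo (0:ℝ) 1, f y * ∫⁻ x in Set.Ioo y 1, ρ' x * ENNReal.ofReal x⁻¹ := by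
  have hprod : μ.map (fun ω => (X ω, V ω)) = (μ.map X).prod unif := by
    rw [← hVlaw]
    exact (indepFun_iff_map_prod_eq_prod_map_map hX.aemeasurable hV.aemeasurable).mp hind
  set g : ℝ → ℝ≥0∞ := fun x => ∫⁻ v in Set.Ioo (0:ℝ) 1, f (x * v) with hgdef
  have hg : Measurable g := by
    apply Measurable.lintegral_prod_right (f := fun x v => f (x * v))
    exact hf.comp (measurable_fst.mul measurable_snd)
  have step1 : ∫⁻ ω, f (X ω * V ω) ∂μ = ∫⁻ p : ℝ × ℝ, f (p.1 * p.2) ∂((μ.map X).prod unif) := by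
    rw [← hprod]
    exact (lintegral_map (hf.comp (measurable_fst.mul measurable_snd))
      (hX.prodMk hV)).symm
  have step2 : ∫⁻ p : ℝ × ℝ, f (p.1 * p.2) ∂((μ.map X).prod unif)
      = ∫⁻ x, g x ∂(μ.map X) := by
    exact lintegral_prod _ (hf.comp (measurable_fst.mul measurable_snd)).aemeasurable
  have step3 : ∫⁻ x, g x ∂(μ.map X) = ∫⁻ ω, g (X ω) ∂μ := lintegral_map hg hX
  have step4 : ∫⁻ ω, g (X ω) ∂μ = ∫⁻ x in Set.Ioo (0:ℝ) 1, g x * ρ' x := hXd g hg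
  -- the two-variable kernel
  set h : ℝ → ℝ → ℝ≥0∞ := fun x y =>
    ({p : ℝ × ℝ | p.2 < p.1}.indicator (fun p => ρ' p.1 * ENNReal.ofReal p.1⁻¹ * f p.2)) (x, y)
    with hhdef
  have hS : MeasurableSet {p : ℝ × ℝ | p.2 < p.1} := measurableSet_lt measurable_snd measurable_fst
  have hhmeas : Measurable (Function.uncurry h) := by
    apply Measurable.indicator _ hS
    exact ((hρ'.comp measurable_fst).mul
      (ENNReal.measurable_ofReal.comp (measurable_fst.inv))).mul (hf.comp measurable_snd)
  have hx_eq : ∀ x ∈ Set.Ioo (0:ℝ) 1,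
      g x * ρ' x = ∫⁻ y in Set.Ioo (0:ℝ) 1, h x y := by
    intro x hx
    have h1 : (fun y => h x y) = (Set.Iio x).indicator (fun y => ρ' x * ENNReal.ofReal x⁻¹ * f y) := by
      funext y
      by_cases hyx : y < x <;> simp [hhdef, Set.indicator, hyx]
    rw [h1, lintegral_indicator measurableSet_Iio _, Measure.restrict_restrict measurableSet_Iio]
    have h2 : Set.Iio x ∩ Set.Ioo (0:ℝ) 1 = Set.Ioo 0 x := by
      ext t; simp only [Set.mem_inter_iff, Set.mem_Iio, Set.mem_Ioo]
      constructor
      · rintro ⟨h1', h2', _⟩; exact ⟨h2', h1'⟩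
      · rintro ⟨h1', h2'⟩; exact ⟨h2', h1', h2'.trans hx.2⟩
    rw [h2, lintegral_const_mul _ hf, hgdef]
    simp only []
    rw [mapScale hx f hf]
    ring
  have hy_eq : ∀ y ∈ Set.Ioo (0:ℝ) 1,
      (∫⁻ x in Set.Ioo (0:ℝ) 1, h x y)
        = f y * ∫⁻ x in Set.Ioo y 1, ρ' x * ENNReal.ofReal x⁻¹ := by
    intro y hy
    have h1 : (fun x => h x y) = (Set.Ioi y).indicator (fun x => ρ' x * ENNReal.ofReal x⁻¹ * f y) := by
      funext x
      by_cases hyx : y < x <;> simp [hhdef, Set.indicator, hyx]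
    rw [h1, lintegral_indicator measurableSet_Ioi _, Measure.restrict_restrict measurableSet_Ioi]
    have h2 : Set.Ioi y ∩ Set.Ioo (0:ℝ) 1 = Set.Ioo y 1 := by
      ext t; simp only [Set.mem_inter_iff, Set.mem_Ioi, Set.mem_Ioo]
      constructor
      · rintro ⟨h1', _, h3'⟩; exact ⟨h1', h3'⟩
      · rintro ⟨h1', h2'⟩; exact ⟨h1', hy.1.trans h1', h2'⟩
    have hmeas2 : Measurable (fun x : ℝ => ρ' x * ENNReal.ofReal x⁻¹) :=
      hρ'.mul (ENNReal.measurable_ofReal.comp measurable_inv)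
    rw [h2, lintegral_mul_const _ hmeas2, mul_comm]
  have hswap : ∫⁻ x in Set.Ioo (0:ℝ) 1, ∫⁻ y in Set.Ioo (0:ℝ) 1, h x y
      = ∫⁻ y in Set.Ioo (0:ℝ) 1, ∫⁻ x in Set.Ioo (0:ℝ) 1, h x y := by
    exact lintegral_lintegral_swap (hhmeas.aemeasurable)
  rw [step1, step2, step3, step4,
    setLIntegral_congr_fun measurableSet_Ioo hx_eq, hswap,
    setLIntegral_congr_fun measurableSet_Ioo hy_eq]

end StickBreakAux

open StickBreakAux

/-- Stick-breaking moment identity: if `L 0 = 1`, `w n = L n * U n`,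
`L (n+1) = L n - w n` with `(U n)` i.i.d. uniform on `(0,1)` (so `w n`
is the `(n+1)`-st stick `ϖ_{n+1}`), then for every measurable `φ ≥ 0` on `(0,1)`,
`∑ₙ E[φ(ϖₙ)] = ∫₀¹ φ(x)/x dx`. -/
theorem stick_breaking_moment_identity
    {Ω : Type*} [MeasurableSpace Ω] (μ : Measure Ω) [IsProbabilityMeasure μ]
    (U L w : ℕ → Ω → ℝ)
    (hUmeas : ∀ n, Measurable (U n))
    (hUindep : iIndepFun U μ)
    (hUlaw : ∀ n, Measure.map (U n) μ = volume.restrict (Set.Ioo (0:ℝ) 1))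
    (hL0 : ∀ ω, L 0 ω = 1)
    (hw : ∀ n ω, w n ω = L n ω * U n ω)
    (hL : ∀ n ω, L (n + 1) ω = L n ω - w n ω)
    (φ : ℝ → ℝ) (hφ : Measurable φ) (hφ0 : ∀ x ∈ Set.Ioo (0:ℝ) 1, 0 ≤ φ x) :
    ∑' n : ℕ, ∫⁻ ω, ENNReal.ofReal (φ (w n ω)) ∂μ
      = ∫⁻ x in Set.Ioo (0:ℝ) 1, ENNReal.ofReal (φ x / x) := by
  set V : ℕ → Ω → ℝ := fun n => (fun x : ℝ => 1 - x) ∘ U n with hVdef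
  have hVmeas : ∀ n, Measurable (V n) := fun n => (measurable_const.sub measurable_id).comp (hUmeas n)
  have hVindep : iIndepFun V μ :=
    hUindep.comp (fun _ => fun x : ℝ => 1 - x) (fun _ => measurable_const.sub measurable_id)
  have hVlaw : ∀ n, Measure.map (V n) μ = unif := by
    intro n
    have hm : Measurable (fun x : ℝ => 1 - x) := measurable_const.sub measurable_id
    show Measure.map ((fun x : ℝ => 1 - x) ∘ U n) μ = unif
    rw [← Measure.map_map hm (hUmeas n), hUlaw n]
    exact map_reflect
  have hLV : ∀ n ω, L n ω = ∏ k ∈ Finset.range n, V k ω := by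
    intro n
    induction n with
    | zero => intro ω; simp [hL0 ω]
    | succ n ih =>
      intro ω
      rw [hL n ω, hw n ω, Finset.prod_range_succ, ← ih ω]
      simp only [hVdef, Function.comp_apply]
      ring
  have hLfun : ∀ n, L n = ∏ k ∈ Finset.range n, V k := by
    intro n
    funext ω
    rw [hLV n ω, Finset.prod_apply]
  have hLmeas : ∀ n, Measurable (L n) := by
    intro n
    have : L n = fun ω => ∏ k ∈ Finset.range n, V k ω := funext fun ω => hLV n ω
    rw [this]
    exact Finset.measurable_prod _ (fun i _ => hVmeas i)
  have hindLV : ∀ n, IndepFun (L n) (V n) μ := by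
    intro n
    rw [hLfun n]
    exact hVindep.indepFun_prod_range_succ hVmeas n
  have hindLU : ∀ n, IndepFun (L n) (U n) μ := by
    intro n
    have hm1 : Measurable (id : ℝ → ℝ) := measurable_id
    have hm2 : Measurable (fun x : ℝ => 1 - x) := measurable_const.sub measurable_id
    have h := (hindLV n).comp hm1 hm2
    have h2 : (fun x : ℝ => 1 - x) ∘ V n = U n := by
      funext ω; simp [hVdef]
    rwa [h2, Function.id_comp] at h
  -- density of L (n+1)
  have D : ∀ n, ∀ f : ℝ → ℝ≥0∞, Measurable f →
      ∫⁻ ω, f (L (n + 1) ω) ∂μ = ∫⁻ x in Set.Ioo (0:ℝ) 1, f x * ρ n x := by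
    intro n
    induction n with
    | zero =>
      intro f hf
      have h1 : L 1 = V 0 := by
        funext ω; rw [hLV 1 ω, Finset.prod_range_one]
      rw [h1, ← lintegral_map hf (hVmeas 0), hVlaw 0]
      refine (setLIntegral_congr_fun measurableSet_Ioo ?_).symm
      intro x _
      simp [ρ]
    | succ n ih =>
      intro f hf
      have h1 : ∀ ω, L (n + 2) ω = L (n + 1) ω * V (n + 1) ω := by
        intro ω
        rw [hLV (n+2) ω, Finset.prod_range_succ, ← hLV (n+1) ω]
      simp_rw [h1]
      rw [keyStep μ (L (n+1)) (V (n+1)) (hLmeas (n+1)) (hVmeas (n+1))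
        (hindLV (n+1)) (hVlaw (n+1)) (ρ n) (ρ_meas n) ih f hf]
      refine setLIntegral_congr_fun measurableSet_Ioo ?_
      intro y hy
      beta_reduce
      rw [calc1 n hy]
  -- density of w n
  have W : ∀ n, ∀ f : ℝ → ℝ≥0∞, Measurable f →
      ∫⁻ ω, f (w n ω) ∂μ = ∫⁻ x in Set.Ioo (0:ℝ) 1, f x * ρ n x := by
    intro n
    cases n with
    | zero =>
      intro f hf
      have h1 : ∀ ω, w 0 ω = U 0 ω := by
        intro ω; rw [hw 0 ω, hL0 ω, one_mul]
      simp_rw [h1]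
      rw [← lintegral_map hf (hUmeas 0), hUlaw 0]
      refine (setLIntegral_congr_fun measurableSet_Ioo ?_).symm
      intro x _
      simp [ρ]
    | succ n =>
      intro f hf
      have h1 : ∀ ω, w (n + 1) ω = L (n + 1) ω * U (n + 1) ω := fun ω => hw (n+1) ω
      simp_rw [h1]
      rw [keyStep μ (L (n+1)) (U (n+1)) (hLmeas (n+1)) (hUmeas (n+1))
        (hindLU (n+1)) (hUlaw (n+1)) (ρ n) (ρ_meas n) (D n) f hf]
      refine setLIntegral_congr_fun measurableSet_Ioo ?_
      intro y hy
      beta_reduce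
      rw [calc1 n hy]
  -- assemble
  set f : ℝ → ℝ≥0∞ := fun x => ENNReal.ofReal (φ x) with hfdef
  have hf : Measurable f := ENNReal.measurable_ofReal.comp hφ
  have step1 : ∑' n : ℕ, ∫⁻ ω, ENNReal.ofReal (φ (w n ω)) ∂μ
      = ∑' n : ℕ, ∫⁻ x in Set.Ioo (0:ℝ) 1, f x * ρ n x := by
    exact tsum_congr fun n => W n f hf
  rw [step1, ← lintegral_tsum (fun n => (hf.fun_mul (ρ_meas n)).aemeasurable)]
  refine setLIntegral_congr_fun measurableSet_Ioo ?_
  intro x hx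
  have hx0 : 0 < x := hx.1
  have hlog : 0 ≤ -Real.log x := by
    have := Real.log_nonpos hx0.le hx.2.le
    linarith
  have hsum : ∑' n : ℕ, ρ n x = ENNReal.ofReal x⁻¹ := by
    have h1 : ∑' n : ℕ, ρ n x = ENNReal.ofReal (∑' n : ℕ, (-Real.log x) ^ n / n.factorial) := by
      rw [ENNReal.ofReal_tsum_of_nonneg
        (fun n => div_nonneg (pow_nonneg hlog n) (Nat.cast_nonneg _))
        (Real.summable_pow_div_factorial _)]
      rfl
    have h2 : ∑' n : ℕ, (-Real.log x) ^ n / (n.factorial : ℝ) = Real.exp (-Real.log x) := by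
      rw [Real.exp_eq_exp_ℝ, NormedSpace.exp_eq_tsum_div]
    rw [h1, h2, Real.exp_neg, Real.exp_log hx0]
  beta_reduce
  rw [ENNReal.tsum_mul_left, hsum, hfdef]
  rw [← ENNReal.ofReal_mul (hφ0 x hx), ← div_eq_mul_inv]
end

section
/- Let (ξ, ζ) and (ξ', ζ') be random vectors in ℝ^n × ℝ, let y ∈ ℝ, K, M ≥ 0, and let h : ℝ^n → ℝ be K-Lipschitz (with respect to the ℓ¹-norm) with 0 ≤ h ≤ M. Then for any p, r > 0: E|h(ξ)·1{ζ ≥ y} − h(ξ')·1{ζ' ≥ y}| ≤ K·E‖ξ − ξ'‖ + M·P(|ζ − y| ≤ r) + M·r^{-p}·E[|ζ − ζ'|^p]. -/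
open MeasureTheory

/-- Lemma (Lp-to-barrier, first part): for random vectors `(ξ,ζ)`, `(ξ',ζ')` in
`ℝⁿ × ℝ`, `h : ℝⁿ → ℝ` `K`-Lipschitz w.r.t. the ℓ¹-norm with `0 ≤ h ≤ M`, and any
`p, r > 0`:
`E|h(ξ)1{ζ≥y} − h(ξ')1{ζ'≥y}| ≤ K·E‖ξ−ξ'‖₁ + M·P(|ζ−y|≤r) + M·r^{−p}·E|ζ−ζ'|^p`. -/
theorem barrier_indicator_bound
    {Ω : Type*} [MeasurableSpace Ω] (μ : Measure Ω) [IsProbabilityMeasure μ]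
    {n : ℕ} (ξ ξ' : Ω → (Fin n → ℝ)) (ζ ζ' : Ω → ℝ)
    (hξ : Measurable ξ) (hξ' : Measurable ξ') (hζ : Measurable ζ) (hζ' : Measurable ζ')
    (y : ℝ) (K M : ℝ) (hK : 0 ≤ K) (hM : 0 ≤ M)
    (h : (Fin n → ℝ) → ℝ)
    (hLip : ∀ a b, |h a - h b| ≤ K * ∑ i, |a i - b i|)
    (hh0 : ∀ a, 0 ≤ h a) (hhM : ∀ a, h a ≤ M)
    (p r : ℝ) (hp : 0 < p) (hr : 0 < r)
    (hInt1 : Integrable (fun ω => ∑ i, |ξ ω i - ξ' ω i|) μ)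
    (hInt2 : Integrable (fun ω => |ζ ω - ζ' ω| ^ p) μ) :
    ∫ ω, |(if y ≤ ζ ω then h (ξ ω) else 0) - (if y ≤ ζ' ω then h (ξ' ω) else 0)| ∂μ
      ≤ K * ∫ ω, (∑ i, |ξ ω i - ξ' ω i|) ∂μ
        + M * (μ {ω | |ζ ω - y| ≤ r}).toReal
        + M * r ^ (-p) * ∫ ω, |ζ ω - ζ' ω| ^ p ∂μ := by
  set S : Set Ω := {ω | |ζ ω - y| ≤ r} with hS_def
  have hSmeas : MeasurableSet S := by
    have hmeas : Measurable fun ω => |ζ ω - y| := (hζ.sub measurable_const).abs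
    exact hmeas measurableSet_Iic
  have hint_ind : Integrable (fun ω => M * S.indicator (fun _ => (1:ℝ)) ω) μ :=
    ((integrable_const (1:ℝ)).indicator hSmeas).const_mul M
  have hgint : Integrable (fun ω => K * (∑ i, |ξ ω i - ξ' ω i|)
      + M * S.indicator (fun _ => (1:ℝ)) ω + M * r ^ (-p) * |ζ ω - ζ' ω| ^ p) μ :=
    ((hInt1.const_mul K).add hint_ind).add (hInt2.const_mul _)
  -- pointwise bound
  have hle : ∀ ω, |(if y ≤ ζ ω then h (ξ ω) else 0) - (if y ≤ ζ' ω then h (ξ' ω) else 0)|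
      ≤ K * (∑ i, |ξ ω i - ξ' ω i|) + M * S.indicator (fun _ => (1:ℝ)) ω
        + M * r ^ (-p) * |ζ ω - ζ' ω| ^ p := by
    intro ω
    have hxp : (0:ℝ) ≤ |ζ ω - ζ' ω| ^ p := Real.rpow_nonneg (abs_nonneg _) p
    have hrp : (0:ℝ) < r ^ (-p) := Real.rpow_pos_of_pos hr _
    have hterm3 : 0 ≤ M * r ^ (-p) * |ζ ω - ζ' ω| ^ p := by positivity
    have hsum0 : 0 ≤ ∑ i, |ξ ω i - ξ' ω i| :=
      Finset.sum_nonneg fun i _ => abs_nonneg _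
    have hsum : 0 ≤ K * ∑ i, |ξ ω i - ξ' ω i| := mul_nonneg hK hsum0
    have hind0 : 0 ≤ S.indicator (fun _ => (1:ℝ)) ω :=
      Set.indicator_nonneg (fun _ _ => zero_le_one) ω
    -- when the indicators differ, M is bounded by the last two terms
    have hmix : r < |ζ ω - ζ' ω| →
        M ≤ M * S.indicator (fun _ => (1:ℝ)) ω + M * r ^ (-p) * |ζ ω - ζ' ω| ^ p := by
      intro hlt
      have h1 : (1:ℝ) ≤ r ^ (-p) * |ζ ω - ζ' ω| ^ p := by
        have : r ^ p ≤ |ζ ω - ζ' ω| ^ p :=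
          Real.rpow_le_rpow hr.le hlt.le hp.le
        calc (1:ℝ) = r ^ (-p) * r ^ p := by
              rw [← Real.rpow_add hr]; simp
          _ ≤ r ^ (-p) * |ζ ω - ζ' ω| ^ p := by nlinarith [hrp]
      have : M * 1 ≤ M * (r ^ (-p) * |ζ ω - ζ' ω| ^ p) := by
        exact mul_le_mul_of_nonneg_left h1 hM
      have hind : 0 ≤ M * S.indicator (fun _ => (1:ℝ)) ω := mul_nonneg hM hind0
      nlinarith
    have hmixS : ω ∈ S →
        M ≤ M * S.indicator (fun _ => (1:ℝ)) ω + M * r ^ (-p) * |ζ ω - ζ' ω| ^ p := by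
      intro hωS
      rw [Set.indicator_of_mem hωS]
      nlinarith
    by_cases h1 : y ≤ ζ ω <;> by_cases h2 : y ≤ ζ' ω
    · simp only [if_pos h1, if_pos h2]
      have := hLip (ξ ω) (ξ' ω)
      have hind : 0 ≤ M * S.indicator (fun _ => (1:ℝ)) ω := mul_nonneg hM hind0
      nlinarith
    · simp only [if_pos h1, if_neg h2, sub_zero]
      have hb : |h (ξ ω)| ≤ M := by
        rw [abs_of_nonneg (hh0 _)]; exact hhM _
      have hM' : M ≤ M * S.indicator (fun _ => (1:ℝ)) ω + M * r ^ (-p) * |ζ ω - ζ' ω| ^ p := by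
        by_cases hωS : ω ∈ S
        · exact hmixS hωS
        · apply hmix
          have hry : r < |ζ ω - y| := lt_of_not_ge hωS
          have h1' : r < ζ ω - y := by
            rwa [abs_of_nonneg (by linarith)] at hry
          have : ζ' ω < y := lt_of_not_ge h2
          calc r < ζ ω - y := h1'
            _ ≤ ζ ω - ζ' ω := by linarith
            _ ≤ |ζ ω - ζ' ω| := le_abs_self _
      linarith [hb, hsum]
    · simp only [if_neg h1, if_pos h2, zero_sub, abs_neg]
      have hb : |h (ξ' ω)| ≤ M := by
        rw [abs_of_nonneg (hh0 _)]; exact hhM _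
      have hM' : M ≤ M * S.indicator (fun _ => (1:ℝ)) ω + M * r ^ (-p) * |ζ ω - ζ' ω| ^ p := by
        by_cases hωS : ω ∈ S
        · exact hmixS hωS
        · apply hmix
          have hry : r < |ζ ω - y| := lt_of_not_ge hωS
          have h1' : r < y - ζ ω := by
            have hlt : ζ ω < y := lt_of_not_ge h1
            rw [abs_of_nonpos (by linarith)] at hry
            linarith
          calc r < y - ζ ω := h1'
            _ ≤ ζ' ω - ζ ω := by linarith
            _ ≤ |ζ ω - ζ' ω| := by rw [abs_sub_comm]; exact le_abs_self _
      linarith [hb, hsum]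
    · simp only [if_neg h1, if_neg h2, sub_zero, abs_zero]
      have hind : 0 ≤ M * S.indicator (fun _ => (1:ℝ)) ω := mul_nonneg hM hind0
      nlinarith
  calc ∫ ω, |(if y ≤ ζ ω then h (ξ ω) else 0) - (if y ≤ ζ' ω then h (ξ' ω) else 0)| ∂μ
      ≤ ∫ ω, (K * (∑ i, |ξ ω i - ξ' ω i|) + M * S.indicator (fun _ => (1:ℝ)) ω
          + M * r ^ (-p) * |ζ ω - ζ' ω| ^ p) ∂μ := by
        apply integral_mono_of_nonneg
        · exact Filter.Eventually.of_forall fun ω => abs_nonneg _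
        · exact hgint
        · exact Filter.Eventually.of_forall hle
    _ = K * ∫ ω, (∑ i, |ξ ω i - ξ' ω i|) ∂μ + M * (μ S).toReal
          + M * r ^ (-p) * ∫ ω, |ζ ω - ζ' ω| ^ p ∂μ := by
        have hAB : Integrable (fun ω => K * (∑ i, |ξ ω i - ξ' ω i|)
            + M * S.indicator (fun _ => (1:ℝ)) ω) μ := (hInt1.const_mul K).add hint_ind
        rw [integral_add hAB (hInt2.const_mul _),
          integral_add (hInt1.const_mul K) hint_ind,
          integral_const_mul, integral_const_mul, integral_const_mul]
        congr 1
        congr 1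
        rw [MeasureTheory.integral_indicator hSmeas]
        simp [Measure.restrict_apply_univ, Measure.real]
end

section
/- Let (ξ, ζ) and (ξ', ζ') be random vectors in ℝ^n × ℝ, y ∈ ℝ, and h : ℝ^n → ℝ be K-Lipschitz with 0 ≤ h ≤ M. Suppose there exist C, γ > 0 such that |P(ζ ≤ y) − P(ζ ≤ y + r)| ≤ C|r|^γ for all r ∈ ℝ. Then for any p > 0: E|h(ξ)·1{ζ ≥ y} − h(ξ')·1{ζ' ≥ y}| ≤ K·E‖ξ − ξ'‖ + M·(2Cγ/p)^{p/(p+γ)}·(1 + p/γ)·E[|ζ − ζ'|^p]^{γ/(p+γ)}. -/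
open MeasureTheory

private lemma eq_of_log_eq {a b : ℝ} (ha : 0 < a) (hb : 0 < b)
    (h : Real.log a = Real.log b) : a = b := by
  rw [← Real.exp_log ha, ← Real.exp_log hb, h]

private lemma opt_identity {C γ p E : ℝ} (hC : 0 < C) (hγ : 0 < γ) (hp : 0 < p)
    (hE : 0 < E) :
    2 * C * ((p * E / (2 * C * γ)) ^ ((1:ℝ) / (p + γ))) ^ γ
      + E / ((p * E / (2 * C * γ)) ^ ((1:ℝ) / (p + γ))) ^ p
    = (2 * C * γ / p) ^ (p / (p + γ)) * (1 + p / γ) * E ^ (γ / (p + γ)) := by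
  have hq : 0 < p + γ := by linarith
  have h2C : (0:ℝ) < 2 * C := by positivity
  have ha : 0 < p * E / (2 * C * γ) := by positivity
  set a := p * E / (2 * C * γ) with ha_def
  have hrγ : (a ^ ((1:ℝ) / (p + γ))) ^ γ = a ^ (γ / (p + γ)) := by
    rw [← Real.rpow_mul ha.le, one_div_mul_eq_div]
  have hrp : (a ^ ((1:ℝ) / (p + γ))) ^ p = a ^ (p / (p + γ)) := by
    rw [← Real.rpow_mul ha.le, one_div_mul_eq_div]
  rw [hrγ, hrp]
  have hb : (0:ℝ) < 2 * C * γ / p := by positivity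
  have hloga : Real.log a
      = Real.log p + Real.log E - (Real.log (2 * C) + Real.log γ) := by
    rw [ha_def, Real.log_div (by positivity) (by positivity),
      Real.log_mul hp.ne' hE.ne', Real.log_mul h2C.ne' hγ.ne']
  have hlogb : Real.log (2 * C * γ / p)
      = Real.log (2 * C) + Real.log γ - Real.log p := by
    rw [Real.log_div (by positivity) hp.ne', Real.log_mul h2C.ne' hγ.ne']
  have eq1 : 2 * C * a ^ (γ / (p + γ))
      = (2 * C * γ / p) ^ (p / (p + γ)) * (p / γ) * E ^ (γ / (p + γ)) := by
    apply eq_of_log_eq (by positivity) (by positivity)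
    have hL : Real.log (2 * C * a ^ (γ / (p + γ)))
        = Real.log (2 * C) + γ / (p + γ) * Real.log a := by
      rw [Real.log_mul h2C.ne' (Real.rpow_pos_of_pos ha _).ne', Real.log_rpow ha]
    have hR : Real.log ((2 * C * γ / p) ^ (p / (p + γ)) * (p / γ) * E ^ (γ / (p + γ)))
        = p / (p + γ) * Real.log (2 * C * γ / p) + (Real.log p - Real.log γ)
          + γ / (p + γ) * Real.log E := by
      rw [Real.log_mul (by positivity) (by positivity),
        Real.log_mul (Real.rpow_pos_of_pos hb _).ne' (by positivity),
        Real.log_rpow hb, Real.log_rpow hE, Real.log_div hp.ne' hγ.ne']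
    rw [hL, hR, hloga, hlogb]
    field_simp
    ring
  have eq2 : E / a ^ (p / (p + γ))
      = (2 * C * γ / p) ^ (p / (p + γ)) * E ^ (γ / (p + γ)) := by
    apply eq_of_log_eq (by positivity) (by positivity)
    have hL : Real.log (E / a ^ (p / (p + γ)))
        = Real.log E - p / (p + γ) * Real.log a := by
      rw [Real.log_div hE.ne' (Real.rpow_pos_of_pos ha _).ne', Real.log_rpow ha]
    have hR : Real.log ((2 * C * γ / p) ^ (p / (p + γ)) * E ^ (γ / (p + γ)))
        = p / (p + γ) * Real.log (2 * C * γ / p) + γ / (p + γ) * Real.log E := by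
      rw [Real.log_mul (Real.rpow_pos_of_pos hb _).ne' (by positivity),
        Real.log_rpow hb, Real.log_rpow hE]
    rw [hL, hR, hloga, hlogb]
    field_simp
    ring
  rw [eq1, eq2]
  ring

/-- Lemma (Lp-to-barrier, second part): under a local Hölder condition on the
distribution function of `ζ` at `y`, for any `p > 0`:
`E|h(ξ)1{ζ≥y} − h(ξ')1{ζ'≥y}|
  ≤ K·E‖ξ−ξ'‖₁ + M·(2Cγ/p)^{p/(p+γ)}·(1+p/γ)·(E|ζ−ζ'|^p)^{γ/(p+γ)}`. -/
theorem barrier_indicator_holder_bound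
    {Ω : Type*} [MeasurableSpace Ω] (μ : Measure Ω) [IsProbabilityMeasure μ]
    {n : ℕ} (ξ ξ' : Ω → (Fin n → ℝ)) (ζ ζ' : Ω → ℝ)
    (hξ : Measurable ξ) (hξ' : Measurable ξ') (hζ : Measurable ζ) (hζ' : Measurable ζ')
    (y : ℝ) (K M : ℝ) (hK : 0 ≤ K) (hM : 0 ≤ M)
    (h : (Fin n → ℝ) → ℝ)
    (hLip : ∀ a b, |h a - h b| ≤ K * ∑ i, |a i - b i|)
    (hh0 : ∀ a, 0 ≤ h a) (hhM : ∀ a, h a ≤ M)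
    (C γ : ℝ) (hC : 0 < C) (hγ : 0 < γ)
    (hHolder : ∀ s : ℝ, |(μ {ω | ζ ω ≤ y}).toReal - (μ {ω | ζ ω ≤ y + s}).toReal|
      ≤ C * |s| ^ γ)
    (p : ℝ) (hp : 0 < p)
    (hInt1 : Integrable (fun ω => ∑ i, |ξ ω i - ξ' ω i|) μ)
    (hInt2 : Integrable (fun ω => |ζ ω - ζ' ω| ^ p) μ) :
    ∫ ω, |(if y ≤ ζ ω then h (ξ ω) else 0) - (if y ≤ ζ' ω then h (ξ' ω) else 0)| ∂μ
      ≤ K * ∫ ω, (∑ i, |ξ ω i - ξ' ω i|) ∂μ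
        + M * (2 * C * γ / p) ^ (p / (p + γ)) * (1 + p / γ)
          * (∫ ω, |ζ ω - ζ' ω| ^ p ∂μ) ^ (γ / (p + γ)) := by
  have hq : 0 < p + γ := by linarith
  set I : ℝ := ∫ ω, (∑ i, |ξ ω i - ξ' ω i|) ∂μ with hI_def
  set Ev : ℝ := ∫ ω, |ζ ω - ζ' ω| ^ p ∂μ with hEv_def
  have hInonneg : 0 ≤ I :=
    integral_nonneg fun ω => Finset.sum_nonneg fun i _ => abs_nonneg _
  have hEvnonneg : 0 ≤ Ev :=
    integral_nonneg fun ω => Real.rpow_nonneg (abs_nonneg _) _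
  -- the set where the two indicators differ
  set S : Set Ω := {ω | y ≤ ζ ω ∧ ζ' ω < y} ∪ {ω | ζ ω < y ∧ y ≤ ζ' ω} with hS_def
  have hSm : MeasurableSet S := by
    exact ((measurableSet_le measurable_const hζ).inter
        (measurableSet_lt hζ' measurable_const)).union
      ((measurableSet_lt hζ measurable_const).inter
        (measurableSet_le measurable_const hζ'))
  -- Step 1: pointwise bound and integral comparison
  have hpt : ∀ ω, |(if y ≤ ζ ω then h (ξ ω) else 0) - (if y ≤ ζ' ω then h (ξ' ω) else 0)|
      ≤ K * (∑ i, |ξ ω i - ξ' ω i|) + S.indicator (fun _ => M) ω := by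
    intro ω
    have hKg : 0 ≤ K * ∑ i, |ξ ω i - ξ' ω i| :=
      mul_nonneg hK (Finset.sum_nonneg fun i _ => abs_nonneg _)
    have hind : 0 ≤ S.indicator (fun _ => M) ω :=
      Set.indicator_nonneg (fun _ _ => hM) ω
    by_cases h1 : y ≤ ζ ω <;> by_cases h2 : y ≤ ζ' ω
    · rw [if_pos h1, if_pos h2]
      exact le_trans (hLip _ _) (le_add_of_nonneg_right hind)
    · have hmem : ω ∈ S := Or.inl ⟨h1, lt_of_not_ge h2⟩
      rw [if_pos h1, if_neg h2, Set.indicator_of_mem hmem, sub_zero,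
        abs_of_nonneg (hh0 _)]
      have := hhM (ξ ω); linarith
    · have hmem : ω ∈ S := Or.inr ⟨lt_of_not_ge h1, h2⟩
      rw [if_neg h1, if_pos h2, Set.indicator_of_mem hmem, zero_sub, abs_neg,
        abs_of_nonneg (hh0 _)]
      have := hhM (ξ' ω); linarith
    · rw [if_neg h1, if_neg h2, sub_zero, abs_zero]
      exact add_nonneg hKg hind
  have hIntR : Integrable
      (fun ω => K * (∑ i, |ξ ω i - ξ' ω i|) + S.indicator (fun _ => M) ω) μ :=
    (hInt1.const_mul K).add ((integrable_const M).indicator hSm)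
  have step1 : ∫ ω, |(if y ≤ ζ ω then h (ξ ω) else 0)
        - (if y ≤ ζ' ω then h (ξ' ω) else 0)| ∂μ
      ≤ K * I + M * (μ S).toReal := by
    calc ∫ ω, |(if y ≤ ζ ω then h (ξ ω) else 0)
          - (if y ≤ ζ' ω then h (ξ' ω) else 0)| ∂μ
        ≤ ∫ ω, (K * (∑ i, |ξ ω i - ξ' ω i|) + S.indicator (fun _ => M) ω) ∂μ :=
          integral_mono_of_nonneg (Filter.Eventually.of_forall fun ω => abs_nonneg _)
            hIntR (Filter.Eventually.of_forall hpt)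
      _ = K * I + M * (μ S).toReal := by
          rw [integral_add (hInt1.const_mul K) ((integrable_const M).indicator hSm),
            integral_const_mul, integral_indicator_const M hSm, smul_eq_mul,
            mul_comm (μ.real S) M, Measure.real]
  -- Step 2: measure bound for every r > 0
  have step2 : ∀ r : ℝ, 0 < r → (μ S).toReal ≤ 2 * C * r ^ γ + Ev / r ^ p := by
    intro r hr
    set A : Set Ω := {ω | ζ ω ≤ y + r} \ {ω | ζ ω ≤ y + (-r)} with hA_def
    set B : Set Ω := {ω | r ^ p ≤ |ζ ω - ζ' ω| ^ p} with hB_def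
    have hsub : S ⊆ A ∪ B := by
      intro ω hω
      by_cases hc : r ≤ |ζ ω - ζ' ω|
      · exact Or.inr (Real.rpow_le_rpow hr.le hc hp.le)
      · left
        push_neg at hc
        obtain ⟨hlo, hhi⟩ := abs_lt.mp hc
        rcases hω with ⟨h1, h2⟩ | ⟨h1, h2⟩
        · exact ⟨by simp only [Set.mem_setOf_eq]; linarith,
            by simp only [Set.mem_setOf_eq]; intro hcon; linarith⟩
        · exact ⟨by simp only [Set.mem_setOf_eq]; linarith,
            by simp only [Set.mem_setOf_eq]; intro hcon; linarith⟩
    have hm1 : MeasurableSet {ω | ζ ω ≤ y + r} := measurableSet_le hζ measurable_const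
    have hm2 : MeasurableSet {ω | ζ ω ≤ y + (-r)} := measurableSet_le hζ measurable_const
    have hss : {ω | ζ ω ≤ y + (-r)} ⊆ {ω | ζ ω ≤ y + r} := by
      intro ω hω; simp only [Set.mem_setOf_eq] at *; linarith
    have hA : (μ A).toReal ≤ 2 * C * r ^ γ := by
      rw [hA_def, measure_diff hss hm2.nullMeasurableSet (measure_ne_top μ _),
        ENNReal.toReal_sub_of_le (measure_mono hss) (measure_ne_top μ _)]
      have t1 := hHolder r
      have t2 := hHolder (-r)
      rw [abs_of_pos hr] at t1
      rw [abs_neg, abs_of_pos hr] at t2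
      have t1' := abs_le.mp t1
      have t2' := abs_le.mp t2
      linarith [t1'.1, t1'.2, t2'.1, t2'.2]
    have hB : (μ B).toReal ≤ Ev / r ^ p := by
      have hrp : 0 < r ^ p := Real.rpow_pos_of_pos hr p
      have hmk := mul_meas_ge_le_integral_of_nonneg
        (Filter.Eventually.of_forall fun ω => Real.rpow_nonneg (abs_nonneg (ζ ω - ζ' ω)) p)
        hInt2 (r ^ p)
      rw [le_div_iff₀ hrp, mul_comm]
      exact hmk
    calc (μ S).toReal ≤ (μ A + μ B).toReal :=
          ENNReal.toReal_mono
            (ENNReal.add_ne_top.mpr ⟨measure_ne_top μ _, measure_ne_top μ _⟩)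
            ((measure_mono hsub).trans (measure_union_le _ _))
      _ = (μ A).toReal + (μ B).toReal :=
          ENNReal.toReal_add (measure_ne_top μ _) (measure_ne_top μ _)
      _ ≤ 2 * C * r ^ γ + Ev / r ^ p := add_le_add hA hB
  have key : ∀ r : ℝ, 0 < r →
      ∫ ω, |(if y ≤ ζ ω then h (ξ ω) else 0)
        - (if y ≤ ζ' ω then h (ξ' ω) else 0)| ∂μ
      ≤ K * I + M * (2 * C * r ^ γ + Ev / r ^ p) := fun r hr =>
    step1.trans (add_le_add_right (mul_le_mul_of_nonneg_left (step2 r hr) hM) _)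
  rcases hEvnonneg.lt_or_eq with hEpos | hE0
  · -- positive case: use the optimal r
    set r : ℝ := (p * Ev / (2 * C * γ)) ^ ((1:ℝ) / (p + γ)) with hr_def
    have hr : 0 < r := Real.rpow_pos_of_pos (by positivity) _
    have hopt := opt_identity hC hγ hp hEpos
    rw [← hr_def] at hopt
    calc ∫ ω, |(if y ≤ ζ ω then h (ξ ω) else 0)
          - (if y ≤ ζ' ω then h (ξ' ω) else 0)| ∂μ
        ≤ K * I + M * (2 * C * r ^ γ + Ev / r ^ p) := key r hr
      _ = K * I + M * (2 * C * γ / p) ^ (p / (p + γ)) * (1 + p / γ)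
          * Ev ^ (γ / (p + γ)) := by rw [hopt]; ring
  · -- degenerate case: Ev = 0
    rw [← hE0, Real.zero_rpow (by positivity : (0:ℝ) < γ / (p + γ)).ne', mul_zero,
      add_zero]
    refine le_of_forall_pos_le_add fun ε hε => ?_
    by_cases hM0 : M = 0
    · have h1 := key 1 one_pos
      rw [hM0, zero_mul, add_zero] at h1
      linarith
    · have hMpos : 0 < M := lt_of_le_of_ne hM (Ne.symm hM0)
      set s : ℝ := (ε / (2 * M * C)) ^ ((1:ℝ) / γ) with hs_def
      have hs : 0 < s := Real.rpow_pos_of_pos (by positivity) _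
      have hsγ : s ^ γ = ε / (2 * M * C) := by
        rw [hs_def, ← Real.rpow_mul (by positivity), one_div_mul_cancel hγ.ne',
          Real.rpow_one]
      have hkey := key s hs
      rw [← hE0, zero_div, add_zero, hsγ] at hkey
      have heq : K * I + M * (2 * C * (ε / (2 * M * C))) = K * I + ε := by
        field_simp
      linarith
end

section
/- Let ℓ = (ℓ_n) be a stick-breaking process on [0,t] and let (ξ_n, ξ_n^{(κ)}), n ∈ ℕ, be random vectors that, conditional on ℓ, are independent with E[|1{ξ_n ≤ x} − 1{ξ_n^{(κ)} ≤ x}| | ℓ_n] ≤ (c/√ℓ_n)·1 ∧ 1 for a constant c > 0 (i.e. the conditional Kolmogorov distance at each stick is at most c/√ℓ_n). Then E[∑_{n=1}^∞ ℓ_n |1{ξ_n ≤ x} − 1{ξ_n^{(κ)} ≤ x}|] ≤ 2c√t. -/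
open MeasureTheory ProbabilityTheory

private lemma sqrt_prod_aux (s : Finset ℕ) (f : ℕ → ℝ) (h : ∀ i ∈ s, 0 ≤ f i) :
    Real.sqrt (∏ i ∈ s, f i) = ∏ i ∈ s, Real.sqrt (f i) := by
  induction s using Finset.cons_induction with
  | empty => simp
  | cons a s ha ih =>
    rw [Finset.prod_cons, Finset.prod_cons,
      Real.sqrt_mul (h a (Finset.mem_cons_self a s)),
      ih (fun i hi => h i (Finset.mem_cons_of_mem hi))]

private lemma integral_prod_aux {Ω : Type*} [MeasurableSpace Ω] (μ : Measure Ω)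
    [IsProbabilityMeasure μ]
    (F : ℕ → Ω → ℝ) (hFmeas : ∀ k, Measurable (F k))
    (hFnn : ∀ k ω, 0 ≤ F k ω)
    (hFindep : iIndepFun F μ) (m : ℕ) :
    ∫ ω, ∏ k ∈ Finset.range m, F k ω ∂μ = ∏ k ∈ Finset.range m, ∫ ω, F k ω ∂μ := by
  induction m with
  | zero => simp
  | succ m ih =>
    have hiid := iIndepFun.indepFun_prod_range_succ hFindep hFmeas m
    have hXp : 0 ≤ (∏ j ∈ Finset.range m, F j) := fun ω => by
      rw [Finset.prod_apply]; exact Finset.prod_nonneg fun k _ => hFnn k ω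
    have hXm : AEMeasurable (∏ j ∈ Finset.range m, F j) μ := by
      have h1 : Measurable fun ω => ∏ j ∈ Finset.range m, F j ω :=
        Finset.measurable_prod _ fun j _ => hFmeas j
      exact ((funext fun ω => (Finset.prod_apply ω _ F) :
        (∏ j ∈ Finset.range m, F j) = fun ω => ∏ j ∈ Finset.range m, F j ω) ▸ h1.aemeasurable)
    calc ∫ ω, ∏ k ∈ Finset.range (m+1), F k ω ∂μ
        = integral μ ((∏ j ∈ Finset.range m, F j) * F m) := by
          congr 1; funext ω; simp [Finset.prod_apply, Finset.prod_range_succ]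
      _ = integral μ (∏ j ∈ Finset.range m, F j) * integral μ (F m) :=
          hiid.integral_mul_eq_mul_integral hXm.aestronglyMeasurable (hFmeas m).aestronglyMeasurable
      _ = (∏ k ∈ Finset.range m, ∫ ω, F k ω ∂μ) * ∫ ω, F m ω ∂μ := by
          rw [show integral μ (∏ j ∈ Finset.range m, F j) = ∫ ω, ∏ k ∈ Finset.range m, F k ω ∂μ
            from by congr 1; funext ω; simp [Finset.prod_apply], ih]
      _ = ∏ k ∈ Finset.range (m+1), ∫ ω, F k ω ∂μ := (Finset.prod_range_succ _ m).symm

private lemma stick_breaking_aux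
    {Ω : Type*} [MeasurableSpace Ω] (μ : Measure Ω) [IsProbabilityMeasure μ]
    (t : ℝ) (ht : 0 < t)
    (U L l : ℕ → Ω → ℝ)
    (hUmeas : ∀ n, Measurable (U n))
    (hUindep : iIndepFun U μ)
    (hUlaw : ∀ n, Measure.map (U n) μ = volume.restrict (Set.Ioo (0:ℝ) 1))
    (hL0 : ∀ ω, L 0 ω = t)
    (hl : ∀ n ω, l n ω = L n ω * U n ω)
    (hL : ∀ n ω, L (n + 1) ω = L n ω - l n ω)
    (D : ℕ → Ω → ℝ) (hDmeas : ∀ n, Measurable (D n))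
    (hD0 : ∀ n ω, 0 ≤ D n ω) (hD1 : ∀ n ω, D n ω ≤ 1)
    (c : ℝ) (hc : 0 < c)
    (hcond : ∀ n,
      μ[D n | MeasurableSpace.comap (l n) inferInstance]
        ≤ᵐ[μ] fun ω => min (c / Real.sqrt (l n ω)) 1) :
    ∫ ω, (∑' n : ℕ, l n ω * D n ω) ∂μ ≤ 2 * c * Real.sqrt t := by
  -- measurability of L and l
  have hLmeas : ∀ n, Measurable (L n) := by
    intro n
    induction n with
    | zero =>
      have : L 0 = fun _ => t := funext hL0
      rw [this]; exact measurable_const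
    | succ n ih =>
      have : L (n+1) = fun ω => L n ω - L n ω * U n ω := by
        funext ω; rw [hL, hl]
      rw [this]; exact ih.sub (ih.mul (hUmeas n))
  have hlmeas : ∀ n, Measurable (l n) := fun n => by
    have : l n = fun ω => L n ω * U n ω := funext (hl n)
    rw [this]; exact (hLmeas n).mul (hUmeas n)
  -- a.e. all U n ∈ (0,1)
  have hU : ∀ᵐ ω ∂μ, ∀ n, U n ω ∈ Set.Ioo (0:ℝ) 1 := by
    rw [ae_all_iff]
    intro n
    have h0 : μ (U n ⁻¹' (Set.Ioo (0:ℝ) 1)ᶜ) = 0 := by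
      have h1 := Measure.map_apply (μ := μ) (hUmeas n) (measurableSet_Ioo (a := (0:ℝ)) (b := 1)).compl
      rw [hUlaw n, Measure.restrict_apply measurableSet_Ioo.compl,
        Set.compl_inter_self, measure_empty] at h1
      exact h1.symm
    rw [ae_iff]
    exact h0
  -- structure of L and l
  have hLform : ∀ ω n, L n ω = t * ∏ k ∈ Finset.range n, (1 - U k ω) := by
    intro ω n
    induction n with
    | zero => simp [hL0]
    | succ n ih =>
      rw [hL, hl, ih, Finset.prod_range_succ]; ring
  have hlform : ∀ ω n, l n ω = (t * ∏ k ∈ Finset.range n, (1 - U k ω)) * U n ω := by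
    intro ω n; rw [hl, hLform]
  -- pointwise bounds on the good set
  have hl_mem : ∀ᵐ ω ∂μ, ∀ n, 0 < l n ω ∧ l n ω ≤ t := by
    filter_upwards [hU] with ω hω n
    have hPpos : 0 < ∏ k ∈ Finset.range n, (1 - U k ω) :=
      Finset.prod_pos fun k _ => by linarith [(hω k).2]
    have hPle : ∏ k ∈ Finset.range n, (1 - U k ω) ≤ 1 :=
      Finset.prod_le_one (fun k _ => by linarith [(hω k).2]) (fun k _ => by linarith [(hω k).1])
    constructor
    · rw [hlform]
      exact mul_pos (mul_pos ht hPpos) (hω n).1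
    · rw [hlform]
      calc (t * ∏ k ∈ Finset.range n, (1 - U k ω)) * U n ω
          ≤ (t * ∏ k ∈ Finset.range n, (1 - U k ω)) * 1 :=
            mul_le_mul_of_nonneg_left (hω n).2.le (by positivity)
        _ = t * ∏ k ∈ Finset.range n, (1 - U k ω) := mul_one _
        _ ≤ t * 1 := mul_le_mul_of_nonneg_left hPle ht.le
        _ = t := mul_one t
  -- the expected square root of l n
  have hsqrtint : ∀ n, ∫ ω, Real.sqrt (l n ω) ∂μ = Real.sqrt t * (2/3)^(n+1) := by
    intro n
    set F : ℕ → Ω → ℝ := fun k ω => if k = n then Real.sqrt (U k ω) else Real.sqrt (1 - U k ω)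
      with hFdef
    have hFmeas : ∀ k, Measurable (F k) := by
      intro k
      rcases eq_or_ne k n with hk | hk
      · have h : F k = fun ω => Real.sqrt (U k ω) := by funext ω; simp [hFdef, hk]
        rw [h]; exact (hUmeas k).sqrt
      · have h : F k = fun ω => Real.sqrt (1 - U k ω) := by funext ω; simp [hFdef, hk]
        rw [h]; exact (measurable_const.sub (hUmeas k)).sqrt
    have hFnn : ∀ k ω, 0 ≤ F k ω := by
      intro k ω; simp only [hFdef]; split_ifs <;> exact Real.sqrt_nonneg _
    have hFindep : iIndepFun F μ := by
      have hg : ∀ k : ℕ, Measurable (fun y : ℝ => if k = n then Real.sqrt y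
          else Real.sqrt (1 - y)) := by
        intro k
        rcases eq_or_ne k n with hk | hk
        · have h : (fun y : ℝ => if k = n then Real.sqrt y else Real.sqrt (1 - y))
              = fun y : ℝ => Real.sqrt y := by funext y; rw [if_pos hk]
          rw [h]; exact Real.continuous_sqrt.measurable
        · have h : (fun y : ℝ => if k = n then Real.sqrt y else Real.sqrt (1 - y))
              = fun y : ℝ => Real.sqrt (1 - y) := by funext y; rw [if_neg hk]
          rw [h]; exact (measurable_const.sub measurable_id).sqrt
      exact hUindep.comp _ hg
    -- integral of each factor
    have hmap : ∀ (k : ℕ) (g : ℝ → ℝ), Measurable g →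
        ∫ ω, g (U k ω) ∂μ = ∫ y in Set.Ioo (0:ℝ) 1, g y := by
      intro k g hg
      rw [← integral_map (hUmeas k).aemeasurable hg.aestronglyMeasurable, hUlaw k]
    have hsq : ∫ y in Set.Ioo (0:ℝ) 1, Real.sqrt y = 2/3 := by
      rw [← integral_Ioc_eq_integral_Ioo, ← intervalIntegral.integral_of_le zero_le_one]
      simp_rw [Real.sqrt_eq_rpow]
      rw [integral_rpow (Or.inl (by norm_num))]
      norm_num
    have hsq' : ∫ y in Set.Ioo (0:ℝ) 1, Real.sqrt (1 - y) = 2/3 := by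
      rw [← integral_Ioc_eq_integral_Ioo, ← intervalIntegral.integral_of_le zero_le_one,
        intervalIntegral.integral_comp_sub_left (fun y => Real.sqrt y) 1]
      norm_num
      simp_rw [Real.sqrt_eq_rpow]
      rw [integral_rpow (Or.inl (by norm_num))]
      norm_num
    have hFint : ∀ k, ∫ ω, F k ω ∂μ = 2/3 := by
      intro k
      by_cases hk : k = n
      · have : F k = fun ω => Real.sqrt (U k ω) := by
          funext ω; simp [hFdef, hk]
        rw [this, hmap k Real.sqrt Real.continuous_sqrt.measurable, hsq]
      · have : F k = fun ω => Real.sqrt (1 - U k ω) := by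
          funext ω; simp [hFdef, hk]
        rw [this, hmap k (fun y => Real.sqrt (1 - y))
          ((measurable_const.sub measurable_id).sqrt), hsq']
    -- a.e. identity for sqrt (l n)
    have hae : ∀ᵐ ω ∂μ, Real.sqrt (l n ω)
        = Real.sqrt t * ∏ k ∈ Finset.range (n+1), F k ω := by
      filter_upwards [hU] with ω hω
      have hPnn : 0 ≤ ∏ k ∈ Finset.range n, (1 - U k ω) :=
        Finset.prod_nonneg fun k _ => by linarith [(hω k).2]
      rw [hlform, Real.sqrt_mul (mul_nonneg ht.le hPnn), Real.sqrt_mul ht.le,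
        sqrt_prod_aux _ _ (fun k _ => by linarith [(hω k).2]),
        Finset.prod_range_succ]
      have h1 : F n ω = Real.sqrt (U n ω) := by simp [hFdef]
      have h2 : ∏ k ∈ Finset.range n, F k ω
          = ∏ k ∈ Finset.range n, Real.sqrt (1 - U k ω) := by
        refine Finset.prod_congr rfl fun k hk => ?_
        have : k ≠ n := Nat.ne_of_lt (Finset.mem_range.mp hk)
        simp [hFdef, this]
      rw [h1, h2]; ring
    rw [integral_congr_ae hae, integral_const_mul,
      integral_prod_aux μ F hFmeas hFnn hFindep (n+1)]
    rw [Finset.prod_congr rfl (fun k _ => hFint k), Finset.prod_const, Finset.card_range]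
  -- integrability facts
  have hDint : ∀ n, Integrable (D n) μ := by
    intro n
    refine Integrable.mono' (integrable_const 1) (hDmeas n).aestronglyMeasurable ?_
    filter_upwards with ω
    rw [Real.norm_eq_abs, abs_of_nonneg (hD0 n ω)]; exact hD1 n ω
  have hlDint : ∀ n, Integrable (fun ω => l n ω * D n ω) μ := by
    intro n
    refine Integrable.mono' (integrable_const t) ((hlmeas n).mul (hDmeas n)).aestronglyMeasurable ?_
    filter_upwards [hl_mem] with ω h
    rw [Real.norm_eq_abs, abs_of_nonneg (mul_nonneg (h n).1.le (hD0 n ω))]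
    calc l n ω * D n ω ≤ l n ω * 1 :=
          mul_le_mul_of_nonneg_left (hD1 n ω) (h n).1.le
      _ ≤ t := by rw [mul_one]; exact (h n).2
  have hcsqrt_int : ∀ n, Integrable (fun ω => c * Real.sqrt (l n ω)) μ := by
    intro n
    refine Integrable.mono' (integrable_const (c * Real.sqrt t))
      ((hlmeas n).sqrt.const_mul c).aestronglyMeasurable ?_
    filter_upwards [hl_mem] with ω h
    rw [Real.norm_eq_abs, abs_of_nonneg (mul_nonneg hc.le (Real.sqrt_nonneg _))]
    exact mul_le_mul_of_nonneg_left (Real.sqrt_le_sqrt (h n).2) hc.le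
  -- the key per-term bound
  have hbound : ∀ n, ∫ ω, l n ω * D n ω ∂μ ≤ c * (Real.sqrt t * (2/3)^(n+1)) := by
    intro n
    have hm' : MeasurableSpace.comap (l n) inferInstance ≤ _ := (hlmeas n).comap_le
    have hlm' : StronglyMeasurable[MeasurableSpace.comap (l n) inferInstance] (l n) :=
      ((@measurable_iff_comap_le Ω ℝ (MeasurableSpace.comap (l n) inferInstance) _ (l n)).mpr
        le_rfl).stronglyMeasurable
    have hpull := condExp_mul_of_stronglyMeasurable_left (m := MeasurableSpace.comap (l n) inferInstance)
      hlm' (hlDint n) (hDint n)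
    calc ∫ ω, l n ω * D n ω ∂μ
        = ∫ ω, (μ[l n * D n | MeasurableSpace.comap (l n) inferInstance]) ω ∂μ :=
          (integral_condExp hm').symm
      _ ≤ ∫ ω, c * Real.sqrt (l n ω) ∂μ := by
          refine integral_mono_ae integrable_condExp (hcsqrt_int n) ?_
          filter_upwards [hpull, hcond n, hl_mem] with ω h1 h2 h3
          have hlpos := (h3 n).1
          calc (μ[l n * D n | MeasurableSpace.comap (l n) inferInstance]) ω
              = l n ω * (μ[D n | MeasurableSpace.comap (l n) inferInstance]) ω := h1
            _ ≤ l n ω * min (c / Real.sqrt (l n ω)) 1 :=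
                mul_le_mul_of_nonneg_left h2 hlpos.le
            _ ≤ l n ω * (c / Real.sqrt (l n ω)) :=
                mul_le_mul_of_nonneg_left (min_le_left _ _) hlpos.le
            _ = c * Real.sqrt (l n ω) := by
                have hds := Real.div_sqrt (x := l n ω)
                conv_rhs => rw [← hds]
                ring
      _ = c * (Real.sqrt t * (2/3)^(n+1)) := by rw [integral_const_mul, hsqrtint n]
  -- summability of the bounds
  have hasummable : Summable (fun n : ℕ => c * (Real.sqrt t * (2/3:ℝ)^(n+1))) := by
    apply Summable.mul_left
    apply Summable.mul_left
    simp_rw [pow_succ]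
    exact (summable_geometric_of_lt_one (by norm_num) (by norm_num)).mul_right _
  have hasum : ∑' n : ℕ, c * (Real.sqrt t * (2/3:ℝ)^(n+1)) = 2 * c * Real.sqrt t := by
    rw [tsum_mul_left, tsum_mul_left]
    simp_rw [pow_succ]
    rw [tsum_mul_right, tsum_geometric_of_lt_one (by norm_num) (by norm_num)]
    norm_num; ring
  have hge : ∀ n, 0 ≤ ∫ ω, l n ω * D n ω ∂μ := by
    intro n
    refine integral_nonneg_of_ae ?_
    filter_upwards [hl_mem] with ω h
    exact mul_nonneg (h n).1.le (hD0 n ω)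
  -- swap integral and sum
  have hlin : ∀ n, ∫⁻ ω, ‖l n ω * D n ω‖₊ ∂μ = ENNReal.ofReal (∫ ω, l n ω * D n ω ∂μ) := by
    intro n
    have hnn : 0 ≤ᵐ[μ] fun ω => l n ω * D n ω := by
      filter_upwards [hl_mem] with ω h
      exact mul_nonneg (h n).1.le (hD0 n ω)
    rw [ofReal_integral_eq_lintegral_ofReal (hlDint n) hnn]
    refine lintegral_congr_ae ?_
    filter_upwards [hl_mem] with ω h
    exact Real.enorm_eq_ofReal (mul_nonneg (h n).1.le (hD0 n ω))
  have hswap : ∫ ω, (∑' n : ℕ, l n ω * D n ω) ∂μ = ∑' n : ℕ, ∫ ω, l n ω * D n ω ∂μ := by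
    refine integral_tsum (fun n => ((hlmeas n).mul (hDmeas n)).aestronglyMeasurable) ?_
    have h1 : ∑' n : ℕ, ∫⁻ ω, ‖l n ω * D n ω‖₊ ∂μ
        ≤ ∑' n : ℕ, ENNReal.ofReal (c * (Real.sqrt t * (2/3:ℝ)^(n+1))) := by
      refine ENNReal.tsum_le_tsum fun n => ?_
      rw [hlin n]
      exact ENNReal.ofReal_le_ofReal (hbound n)
    rw [← ENNReal.ofReal_tsum_of_nonneg (fun n => by positivity) hasummable] at h1
    exact (h1.trans_lt ENNReal.ofReal_lt_top).ne
  rw [hswap, ← hasum]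
  exact Summable.tsum_le_tsum hbound (Summable.of_nonneg_of_le hge hbound hasummable) hasummable

/-- If `(ℓₙ)` is a stick-breaking process on `[0,t]` (here `l n = ℓ_{n+1}`) and the
pairs `(ξₙ, ξₙ^{(κ)})` satisfy the conditional Kolmogorov-distance bound
`E[|1{ξₙ≤x} − 1{ξₙ^{(κ)}≤x}| | ℓₙ] ≤ min{c/√ℓₙ, 1}` a.s., then
`E[∑ₙ ℓₙ |1{ξₙ≤x} − 1{ξₙ^{(κ)}≤x}|] ≤ 2c√t`. -/
theorem stick_breaking_indicator_sum_bound
    {Ω : Type*} [MeasurableSpace Ω] (μ : Measure Ω) [IsProbabilityMeasure μ]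
    (t : ℝ) (ht : 0 < t)
    (U L l : ℕ → Ω → ℝ)
    (hUmeas : ∀ n, Measurable (U n))
    (hUindep : iIndepFun U μ)
    (hUlaw : ∀ n, Measure.map (U n) μ = volume.restrict (Set.Ioo (0:ℝ) 1))
    (hL0 : ∀ ω, L 0 ω = t)
    (hl : ∀ n ω, l n ω = L n ω * U n ω)
    (hL : ∀ n ω, L (n + 1) ω = L n ω - l n ω)
    (ξ ξκ : ℕ → Ω → ℝ) (hξmeas : ∀ n, Measurable (ξ n)) (hξκmeas : ∀ n, Measurable (ξκ n))
    (x : ℝ) (c : ℝ) (hc : 0 < c)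
    (hcond : ∀ n,
      μ[(fun ω => |(if ξ n ω ≤ x then (1:ℝ) else 0) - (if ξκ n ω ≤ x then (1:ℝ) else 0)|)
          | MeasurableSpace.comap (l n) inferInstance]
        ≤ᵐ[μ] fun ω => min (c / Real.sqrt (l n ω)) 1) :
    ∫ ω, (∑' n : ℕ, l n ω
        * |(if ξ n ω ≤ x then (1:ℝ) else 0) - (if ξκ n ω ≤ x then (1:ℝ) else 0)|) ∂μ
      ≤ 2 * c * Real.sqrt t := by
  have hDmeas : ∀ n, Measurable (fun ω =>
      |(if ξ n ω ≤ x then (1:ℝ) else 0) - (if ξκ n ω ≤ x then (1:ℝ) else 0)|) := by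
    intro n
    apply Measurable.abs
    exact (Measurable.ite (measurableSet_le (hξmeas n) measurable_const)
        measurable_const measurable_const).sub
      (Measurable.ite (measurableSet_le (hξκmeas n) measurable_const)
        measurable_const measurable_const)
  exact stick_breaking_aux μ t ht U L l hUmeas hUindep hUlaw hL0 hl hL
    (fun n ω => |(if ξ n ω ≤ x then (1:ℝ) else 0) - (if ξκ n ω ≤ x then (1:ℝ) else 0)|)
    hDmeas
    (fun n ω => abs_nonneg _)
    (fun n ω => by beta_reduce; split_ifs <;> norm_num)
    c hc hcond
end

section
/- Suppose a random variable ζ (the time of the infimum un τ_T of a Lévy process) has a density on (0,T) of the form s ↦ n̲(s)·n̄(T−s), where n̲, n̄ : (0,T] → (0,∞) are non-increasing functions such that n̲(s)n̄(T−s) ≤ C s^{γ−1}(T−s)^{γ−1} on (0,T) for some C > 0 and γ ∈ (0,1). Then there exists a constant C' > 0 such that for all 0 ≤ s ≤ t ≤ T: P(ζ ≤ t) − P(ζ ≤ s) ≤ C'·(t − s)^γ. -/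
open MeasureTheory Set

lemma holder_sub_rpow {a b p : ℝ} (ha : 0 ≤ a) (hab : a ≤ b) (h0 : 0 ≤ p) (h1 : p ≤ 1) :
    b ^ p - a ^ p ≤ (b - a) ^ p := by
  have hba : 0 ≤ b - a := by linarith
  have h := NNReal.rpow_add_le_add_rpow ((b - a).toNNReal) (a.toNNReal) h0 h1
  have hsum : ((b - a).toNNReal + a.toNNReal) = b.toNNReal := by
    rw [← Real.toNNReal_add hba ha, sub_add_cancel]
  rw [hsum] at h
  have h' := (NNReal.coe_le_coe).2 h
  push_cast [NNReal.coe_rpow, Real.coe_toNNReal _ (ha.trans hab),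
    Real.coe_toNNReal _ hba, Real.coe_toNNReal _ ha] at h'
  linarith

lemma holder_integral_rpow_le {γ : ℝ} (hγ0 : 0 < γ) (hγ1 : γ < 1) {a b : ℝ}
    (ha : 0 ≤ a) (hab : a ≤ b) :
    ∫ u in Set.Ioc a b, u ^ (γ - 1) ≤ (b - a) ^ γ / γ := by
  rw [← intervalIntegral.integral_of_le hab,
    integral_rpow (Or.inl (by linarith : (-1:ℝ) < γ - 1)), sub_add_cancel]
  have h := holder_sub_rpow ha hab hγ0.le hγ1.le
  gcongr

/-- Hölder continuity of the distribution function of the time of the infimum: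
if `ζ` has density `s ↦ n̲(s)·n̄(T−s)` on `(0,T)` with `n̲, n̄` positive and
non-increasing on `(0,T]` and `n̲(s)n̄(T−s) ≤ C s^{γ−1}(T−s)^{γ−1}`, then there is
`C' > 0` with `P(ζ ≤ t) − P(ζ ≤ s) ≤ C'(t−s)^γ` for all `0 ≤ s ≤ t ≤ T`. -/
theorem infimum_time_cdf_holder
    {Ω : Type*} [MeasurableSpace Ω] (μ : Measure Ω) [IsProbabilityMeasure μ]
    (ζ : Ω → ℝ) (hζ : Measurable ζ)
    (T C γ : ℝ) (hT : 0 < T) (hC : 0 < C) (hγ0 : 0 < γ) (hγ1 : γ < 1)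
    (n₁ n₂ : ℝ → ℝ)
    (hn₁pos : ∀ s ∈ Set.Ioc (0:ℝ) T, 0 < n₁ s)
    (hn₂pos : ∀ s ∈ Set.Ioc (0:ℝ) T, 0 < n₂ s)
    (hn₁mono : AntitoneOn n₁ (Set.Ioc (0:ℝ) T))
    (hn₂mono : AntitoneOn n₂ (Set.Ioc (0:ℝ) T))
    (hbound : ∀ s ∈ Set.Ioo (0:ℝ) T,
      n₁ s * n₂ (T - s) ≤ C * s ^ (γ - 1) * (T - s) ^ (γ - 1))
    (hdens : ∀ s t : ℝ, 0 ≤ s → s ≤ t → t ≤ T →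
      (μ {ω | ζ ω ≤ t}).toReal - (μ {ω | ζ ω ≤ s}).toReal
        = ∫ u in Set.Ioc s t ∩ Set.Ioo 0 T, n₁ u * n₂ (T - u)) :
    ∃ C' > 0, ∀ s t : ℝ, 0 ≤ s → s ≤ t → t ≤ T →
      (μ {ω | ζ ω ≤ t}).toReal - (μ {ω | ζ ω ≤ s}).toReal ≤ C' * (t - s) ^ γ := by
  set c : ℝ := T / 2 with hc_def
  have hc : 0 < c := by positivity
  have hcT : c < T := by rw [hc_def]; linarith
  have hcr : 0 < c ^ (γ - 1) := Real.rpow_pos_of_pos hc _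
  set K : ℝ := C * c ^ (γ - 1) / γ with hK_def
  have hK0 : 0 < K := by positivity
  refine ⟨2 * K, by positivity, fun s t hs hst htT => ?_⟩
  rw [hdens s t hs hst htT]
  set g : ℝ → ℝ := fun u => C * u ^ (γ - 1) * (T - u) ^ (γ - 1) with hg_def
  have hgmeas : Measurable g := by fun_prop
  set I : Set ℝ := Set.Ioc s t ∩ Set.Ioo 0 T with hI_def
  have hImeas : MeasurableSet I := measurableSet_Ioc.inter measurableSet_Ioo
  have hIsub : I ⊆ Set.Ioo 0 T := Set.inter_subset_right
  have hts : 0 ≤ t - s := by linarith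
  have htsγ : 0 ≤ (t - s) ^ γ := Real.rpow_nonneg hts _
  -- integrability of the dominating function g on the two halves
  have h_rpow_int : ∀ a b : ℝ, IntegrableOn (fun u : ℝ => u ^ (γ - 1)) (Set.Ioc a b) :=
    fun a b => (intervalIntegral.intervalIntegrable_rpow' (by linarith : (-1:ℝ) < γ - 1)).1
  have h_sub_int : IntegrableOn (fun u : ℝ => (T - u) ^ (γ - 1)) (Set.Ioc c T) := by
    have h0 : IntervalIntegrable (fun x : ℝ => x ^ (γ - 1)) volume (T - c) 0 :=
      intervalIntegral.intervalIntegrable_rpow' (by linarith)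
    have h1 := h0.comp_sub_left T
    simp only [sub_sub_cancel, sub_zero] at h1
    exact h1.1
  have hgA : IntegrableOn g (Set.Ioc 0 c) := by
    refine Integrable.mono' ((h_rpow_int 0 c).const_mul (C * c ^ (γ - 1)))
      hgmeas.aestronglyMeasurable ?_
    filter_upwards [ae_restrict_mem measurableSet_Ioc] with u hu
    have hu0 : 0 < u := hu.1
    have hTu : c ≤ T - u := by rw [hc_def] at *; linarith [hu.2]
    have h1 : (T - u) ^ (γ - 1) ≤ c ^ (γ - 1) :=
      Real.rpow_le_rpow_of_nonpos hc hTu (by linarith)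
    have h2 : (0:ℝ) < u ^ (γ - 1) := Real.rpow_pos_of_pos hu0 _
    have hgu : 0 ≤ g u := by
      have : (0:ℝ) < T - u := by linarith
      have := Real.rpow_pos_of_pos this (γ - 1)
      positivity
    rw [Real.norm_of_nonneg hgu]
    calc C * u ^ (γ - 1) * (T - u) ^ (γ - 1) ≤ C * u ^ (γ - 1) * c ^ (γ - 1) := by
          gcongr
      _ = C * c ^ (γ - 1) * u ^ (γ - 1) := by ring
  have hgB : IntegrableOn g (Set.Ioc c T) := by
    refine Integrable.mono' (h_sub_int.const_mul (C * c ^ (γ - 1)))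
      hgmeas.aestronglyMeasurable ?_
    filter_upwards [ae_restrict_mem measurableSet_Ioc] with u hu
    have hu0 : 0 < u := lt_trans hc hu.1
    have h1 : u ^ (γ - 1) ≤ c ^ (γ - 1) :=
      Real.rpow_le_rpow_of_nonpos hc hu.1.le (by linarith)
    have hTu0 : 0 ≤ T - u := by linarith [hu.2]
    have h2 : (0:ℝ) ≤ (T - u) ^ (γ - 1) := Real.rpow_nonneg hTu0 _
    have hgu : 0 ≤ g u := by
      have h3 : (0:ℝ) < u ^ (γ - 1) := Real.rpow_pos_of_pos hu0 _
      positivity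
    rw [Real.norm_of_nonneg hgu]
    calc C * u ^ (γ - 1) * (T - u) ^ (γ - 1) ≤ C * c ^ (γ - 1) * (T - u) ^ (γ - 1) := by
          gcongr
      _ = C * c ^ (γ - 1) * (T - u) ^ (γ - 1) := rfl
  have hgIoo : IntegrableOn g (Set.Ioo 0 T) := by
    refine (hgA.union hgB).mono_set fun u hu => ?_
    rcases le_or_gt u c with h | h
    · exact Or.inl ⟨hu.1, h⟩
    · exact Or.inr ⟨h, hu.2.le⟩
  have hgI : IntegrableOn g I := hgIoo.mono_set hIsub
  -- the density f and its properties on I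
  set f : ℝ → ℝ := fun u => n₁ u * n₂ (T - u) with hf_def
  have hfg : ∀ u ∈ I, f u ≤ g u := fun u hu => hbound u (hIsub hu)
  have hf0 : ∀ u ∈ I, 0 ≤ f u := by
    intro u hu
    have h1 := hIsub hu
    have hn1 := hn₁pos u (Set.mem_Ioc.mpr ⟨h1.1, h1.2.le⟩)
    have hn2 := hn₂pos (T - u) (Set.mem_Ioc.mpr ⟨by linarith [h1.2], by linarith [h1.1]⟩)
    positivity
  have hfmeas : AEMeasurable f (volume.restrict I) := by
    have m1 : AEMeasurable n₁ (volume.restrict (Set.Ioc 0 T)) :=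
      aemeasurable_restrict_of_antitoneOn measurableSet_Ioc hn₁mono
    have mono2 : MonotoneOn (fun u => n₂ (T - u)) (Set.Ico (0:ℝ) T) := by
      intro u hu v hv huv
      exact hn₂mono ⟨by linarith [hv.2], by linarith [hu.1]⟩
        ⟨by linarith [hu.2], by linarith [hu.1]⟩ (by linarith)
    have m2 : AEMeasurable (fun u => n₂ (T - u)) (volume.restrict (Set.Ico 0 T)) :=
      aemeasurable_restrict_of_monotoneOn measurableSet_Ico mono2
    have le1 : volume.restrict I ≤ volume.restrict (Set.Ioc (0:ℝ) T) :=
      Measure.restrict_mono (fun u hu => Set.mem_Ioc.mpr ⟨(hIsub hu).1, (hIsub hu).2.le⟩) le_rfl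
    have le2 : volume.restrict I ≤ volume.restrict (Set.Ico (0:ℝ) T) :=
      Measure.restrict_mono (fun u hu => Set.mem_Ico.mpr ⟨(hIsub hu).1.le, (hIsub hu).2⟩) le_rfl
    exact (m1.mono_measure le1).mul (m2.mono_measure le2)
  have hfI : IntegrableOn f I := by
    refine Integrable.mono' hgI hfmeas.aestronglyMeasurable ?_
    filter_upwards [ae_restrict_mem hImeas] with u hu
    rw [Real.norm_of_nonneg (hf0 u hu)]
    exact hfg u hu
  have step1 : ∫ u in I, f u ≤ ∫ u in I, g u :=
    setIntegral_mono_on hfI hgI hImeas hfg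
  -- split I at c
  have hsplit : ∫ u in I, g u
      = (∫ u in I ∩ Set.Iic c, g u) + ∫ u in I \ Set.Iic c, g u := by
    rw [← setIntegral_union (Set.disjoint_sdiff_right.mono_left Set.inter_subset_right)
      (hImeas.diff measurableSet_Iic)
      (hgI.mono_set Set.inter_subset_left) (hgI.mono_set Set.diff_subset),
      Set.inter_union_diff]
  -- bound on the left half
  have boundA : ∫ u in I ∩ Set.Iic c, g u ≤ K * (t - s) ^ γ := by
    have hsubA : I ∩ Set.Iic c ⊆ Set.Ioc s (min t c) :=
      fun u hu => ⟨hu.1.1.1, le_min hu.1.1.2 hu.2⟩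
    have hmajI : IntegrableOn (fun u : ℝ => C * c ^ (γ - 1) * u ^ (γ - 1))
        (Set.Ioc s (min t c)) := (h_rpow_int s (min t c)).const_mul _
    have step : ∫ u in I ∩ Set.Iic c, g u
        ≤ ∫ u in I ∩ Set.Iic c, C * c ^ (γ - 1) * u ^ (γ - 1) := by
      refine setIntegral_mono_on (hgI.mono_set Set.inter_subset_left)
        (hmajI.mono_set hsubA) (hImeas.inter measurableSet_Iic) ?_
      intro u hu
      have hu0 : 0 < u := (hIsub hu.1).1
      have huT : u < T := (hIsub hu.1).2
      have hu2 : u ≤ c := hu.2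
      have hTu : c ≤ T - u := by rw [hc_def] at hu2 ⊢; linarith
      have h1 : (T - u) ^ (γ - 1) ≤ c ^ (γ - 1) :=
        Real.rpow_le_rpow_of_nonpos hc hTu (by linarith)
      have h2 : (0:ℝ) < u ^ (γ - 1) := Real.rpow_pos_of_pos hu0 _
      calc C * u ^ (γ - 1) * (T - u) ^ (γ - 1) ≤ C * u ^ (γ - 1) * c ^ (γ - 1) := by gcongr
        _ = C * c ^ (γ - 1) * u ^ (γ - 1) := by ring
    have step2 : ∫ u in I ∩ Set.Iic c, C * c ^ (γ - 1) * u ^ (γ - 1)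
        ≤ ∫ u in Set.Ioc s (min t c), C * c ^ (γ - 1) * u ^ (γ - 1) := by
      refine setIntegral_mono_set hmajI ?_ (HasSubset.Subset.eventuallyLE hsubA)
      filter_upwards [ae_restrict_mem measurableSet_Ioc] with u hu
      have hu0 : 0 < u := lt_of_le_of_lt hs hu.1
      have := Real.rpow_pos_of_pos hu0 (γ - 1)
      positivity
    have step3 : ∫ u in Set.Ioc s (min t c), C * c ^ (γ - 1) * u ^ (γ - 1)
        ≤ K * (t - s) ^ γ := by
      rw [MeasureTheory.integral_const_mul]
      rcases le_or_gt s (min t c) with h | h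
      · have h4 := holder_integral_rpow_le hγ0 hγ1 hs h
        have h5 : (min t c - s) ^ γ ≤ (t - s) ^ γ :=
          Real.rpow_le_rpow (by linarith) (by simp only [sub_le_sub_iff_right]; exact min_le_left _ _) hγ0.le
        calc C * c ^ (γ - 1) * ∫ u in Set.Ioc s (min t c), u ^ (γ - 1)
            ≤ C * c ^ (γ - 1) * ((min t c - s) ^ γ / γ) := by gcongr
          _ ≤ C * c ^ (γ - 1) * ((t - s) ^ γ / γ) := by gcongr
          _ = K * (t - s) ^ γ := by rw [hK_def]; ring
      · rw [Set.Ioc_eq_empty (not_lt.mpr h.le), Measure.restrict_empty, integral_zero_measure]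
        rw [mul_zero]
        exact mul_nonneg hK0.le htsγ
    linarith
  -- bound on the right half
  have boundB : ∫ u in I \ Set.Iic c, g u ≤ K * (t - s) ^ γ := by
    have hsubB : I \ Set.Iic c ⊆ Set.Ioc (max s c) t := by
      intro u hu
      have h1 : c < u := not_le.mp hu.2
      exact ⟨max_lt hu.1.1.1 h1, hu.1.1.2⟩
    have hsubB' : I \ Set.Iic c ⊆ Set.Ioc c T := by
      intro u hu
      exact ⟨not_le.mp hu.2, (hIsub hu.1).2.le⟩
    have hsubB'' : Set.Ioc (max s c) t ⊆ Set.Ioc c T :=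
      fun u hu => ⟨lt_of_le_of_lt (le_max_right s c) hu.1, hu.2.trans htT⟩
    have hmajI : IntegrableOn (fun u : ℝ => C * c ^ (γ - 1) * (T - u) ^ (γ - 1))
        (Set.Ioc (max s c) t) := by
      have h7 : IntegrableOn (fun u : ℝ => C * c ^ (γ - 1) * (T - u) ^ (γ - 1))
          (Set.Ioc c T) := h_sub_int.const_mul _
      exact h7.mono_set hsubB''
    have step : ∫ u in I \ Set.Iic c, g u
        ≤ ∫ u in I \ Set.Iic c, C * c ^ (γ - 1) * (T - u) ^ (γ - 1) := by
      refine setIntegral_mono_on (hgI.mono_set Set.diff_subset)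
        (hmajI.mono_set hsubB) (hImeas.diff measurableSet_Iic) ?_
      intro u hu
      have hcu : c < u := not_le.mp hu.2
      have huT : u < T := (hIsub hu.1).2
      have h1 : u ^ (γ - 1) ≤ c ^ (γ - 1) :=
        Real.rpow_le_rpow_of_nonpos hc hcu.le (by linarith)
      have h2 : (0:ℝ) ≤ (T - u) ^ (γ - 1) := Real.rpow_nonneg (by linarith) _
      calc C * u ^ (γ - 1) * (T - u) ^ (γ - 1) ≤ C * c ^ (γ - 1) * (T - u) ^ (γ - 1) := by
            gcongr
        _ = C * c ^ (γ - 1) * (T - u) ^ (γ - 1) := rfl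
    have step2 : ∫ u in I \ Set.Iic c, C * c ^ (γ - 1) * (T - u) ^ (γ - 1)
        ≤ ∫ u in Set.Ioc (max s c) t, C * c ^ (γ - 1) * (T - u) ^ (γ - 1) := by
      refine setIntegral_mono_set hmajI ?_ (HasSubset.Subset.eventuallyLE hsubB)
      filter_upwards [ae_restrict_mem measurableSet_Ioc] with u hu
      have h2 : (0:ℝ) ≤ (T - u) ^ (γ - 1) := Real.rpow_nonneg (by linarith [hu.2]) _
      positivity
    have step3 : ∫ u in Set.Ioc (max s c) t, C * c ^ (γ - 1) * (T - u) ^ (γ - 1)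
        ≤ K * (t - s) ^ γ := by
      rw [MeasureTheory.integral_const_mul]
      rcases le_or_gt (max s c) t with h | h
      · have hkey : ∫ u in Set.Ioc (max s c) t, (T - u) ^ (γ - 1)
            = ∫ u in Set.Ioc (T - t) (T - max s c), u ^ (γ - 1) := by
          rw [← intervalIntegral.integral_of_le h,
            intervalIntegral.integral_comp_sub_left (fun x : ℝ => x ^ (γ - 1)) T,
            intervalIntegral.integral_of_le (by linarith)]
        have h4 := holder_integral_rpow_le hγ0 hγ1 (by linarith : (0:ℝ) ≤ T - t)
          (by linarith : T - t ≤ T - max s c)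
        have h5 : (T - max s c - (T - t)) ^ γ ≤ (t - s) ^ γ := by
          apply Real.rpow_le_rpow (by linarith) (by
            have := le_max_left s c
            linarith) hγ0.le
        calc C * c ^ (γ - 1) * ∫ u in Set.Ioc (max s c) t, (T - u) ^ (γ - 1)
            ≤ C * c ^ (γ - 1) * ((T - max s c - (T - t)) ^ γ / γ) := by
              rw [hkey]; gcongr
          _ ≤ C * c ^ (γ - 1) * ((t - s) ^ γ / γ) := by gcongr
          _ = K * (t - s) ^ γ := by rw [hK_def]; ring
      · rw [Set.Ioc_eq_empty (not_lt.mpr h.le), Measure.restrict_empty, integral_zero_measure]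
        rw [mul_zero]
        exact mul_nonneg hK0.le htsγ
    linarith
  calc ∫ u in I, f u ≤ ∫ u in I, g u := step1
    _ = (∫ u in I ∩ Set.Iic c, g u) + ∫ u in I \ Set.Iic c, g u := hsplit
    _ ≤ K * (t - s) ^ γ + K * (t - s) ^ γ := add_le_add boundA boundB
    _ = 2 * K * (t - s) ^ γ := by ring
end
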